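/- Let M ⊂ ℂ³ be a 2-dimensional C¹ semi-legendrian submanifold, i.e., at every point w ∈ M the tangent plane T_wM is contained in the contact plane 𝒫_w = ker(dy − λ dx). If moreover T_wM is transverse to the fiber direction ∂/∂λ at every point, then each tangent plane T_wM is a complex line; that is, T_wM is stable under multiplication by i. -/

import Mathlib

/-- The contact plane `𝒫 = ker(dy − λ dx)` at a point of ℂ³ with λ-coordinate `l`. -/
noncomputable def contactPlane (l : ℂ) : Submodule ℝ (ℂ × ℂ × ℂ) where
  carrier := {w | w.2.1 = l * w.1}
  add_mem' := by
    intro a b ha hb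
    simp only [Set.mem_setOf_eq, Prod.fst_add, Prod.snd_add] at *
    rw [ha, hb]; ring
  zero_mem' := by simp
  smul_mem' := by
    intro r w hw
    simp only [Set.mem_setOf_eq, Prod.smul_fst, Prod.smul_snd, Complex.real_smul] at *
    rw [hw]; ring

/-- The fiber direction `∂/∂λ` of the projection `p(x, y, λ) = (x, y)`. -/
noncomputable def fiberDir : Submodule ℝ (ℂ × ℂ × ℂ) where
  carrier := {w | w.1 = 0 ∧ w.2.1 = 0}
  add_mem' := by intro a b ha hb; simp_all [Prod.fst_add, Prod.snd_add]
  zero_mem' := by simp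
  smul_mem' := by intro r w hw; simp_all [Prod.smul_fst, Prod.smul_snd]

/-- let `M = {F = 0} ⊂ ℂ³` be a 2-dimensional C¹ semi-legendrian
submanifold (every tangent plane is contained in the contact plane), transverse to
the fiber direction `∂/∂λ` at every point. Then each tangent plane is a complex
line: it is stable under multiplication by `i`. -/
theorem stmt_12 (F : ℂ × ℂ × ℂ → Fin 4 → ℝ) (hF : ContDiff ℝ 1 F)
    (hreg : ∀ w, F w = 0 → Function.Surjective (fderiv ℝ F w))
    (hleg : ∀ w, F w = 0 → LinearMap.ker (fderiv ℝ F w : ℂ × ℂ × ℂ →ₗ[ℝ] Fin 4 → ℝ) ≤ contactPlane w.2.2)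
    (htrans : ∀ w, F w = 0 → LinearMap.ker (fderiv ℝ F w : ℂ × ℂ × ℂ →ₗ[ℝ] Fin 4 → ℝ) ⊓ fiberDir = ⊥) :
    ∀ w, F w = 0 → ∀ v ∈ LinearMap.ker (fderiv ℝ F w : ℂ × ℂ × ℂ →ₗ[ℝ] Fin 4 → ℝ),
      Complex.I • v ∈ LinearMap.ker (fderiv ℝ F w : ℂ × ℂ × ℂ →ₗ[ℝ] Fin 4 → ℝ) := by
  intro w₀ hw₀ v hv
  have hFd : Differentiable ℝ F := hF.differentiable one_ne_zero
  -- the map Φ w = (F w, w.1) and its derivative A at w₀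
  set Φ : ℂ × ℂ × ℂ → ((Fin 4 → ℝ) × ℂ) := fun w => (F w, w.1) with hΦdef
  set A : (ℂ × ℂ × ℂ) →L[ℝ] ((Fin 4 → ℝ) × ℂ) :=
    (fderiv ℝ F w₀).prod (ContinuousLinearMap.fst ℝ ℂ (ℂ × ℂ)) with hAdef
  -- A is injective
  have hAker : ∀ u, A u = 0 → u = 0 := by
    intro u hu
    simp only [hAdef, ContinuousLinearMap.prod_apply, Prod.mk_eq_zero,
      ContinuousLinearMap.coe_fst'] at hu
    have hker : u ∈ LinearMap.ker (fderiv ℝ F w₀ : ℂ × ℂ × ℂ →ₗ[ℝ] Fin 4 → ℝ) := hu.1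
    have h21 : u.2.1 = w₀.2.2 * u.1 := hleg w₀ hw₀ hker
    have : u ∈ LinearMap.ker (fderiv ℝ F w₀ : ℂ × ℂ × ℂ →ₗ[ℝ] Fin 4 → ℝ) ⊓ fiberDir := by
      refine ⟨hker, ?_, ?_⟩
      · exact hu.2
      · rw [h21, hu.2, mul_zero]
    rw [htrans w₀ hw₀] at this
    simpa using this
  have hAinj : Function.Injective A := by
    intro a b hab
    have := hAker (a - b) (by rw [map_sub, hab, sub_self])
    exact sub_eq_zero.mp this
  -- upgrade A to a continuous linear equivalence
  have hdim : Module.finrank ℝ (ℂ × ℂ × ℂ) = Module.finrank ℝ ((Fin 4 → ℝ) × ℂ) := by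
    simp [Complex.finrank_real_complex]
  set A' : (ℂ × ℂ × ℂ) ≃L[ℝ] ((Fin 4 → ℝ) × ℂ) :=
    (LinearMap.linearEquivOfInjective (A : (ℂ × ℂ × ℂ) →ₗ[ℝ] ((Fin 4 → ℝ) × ℂ))
      hAinj hdim).toContinuousLinearEquiv with hA'def
  have hA'coe : ∀ u, A' u = A u := fun u => by
    simp [hA'def, LinearMap.linearEquivOfInjective_apply]
  -- Φ is ContDiffAt and has derivative A' at w₀
  have hΦcd : ContDiffAt ℝ 1 Φ w₀ := (hF.contDiffAt).prodMk contDiffAt_fst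
  have hΦd : HasFDerivAt Φ (A' : (ℂ × ℂ × ℂ) →L[ℝ] ((Fin 4 → ℝ) × ℂ)) w₀ := by
    have h1 : HasFDerivAt Φ A w₀ :=
      ((hFd w₀).hasFDerivAt).prodMk ((ContinuousLinearMap.fst ℝ ℂ (ℂ × ℂ)).hasFDerivAt)
    have : (A' : (ℂ × ℂ × ℂ) →L[ℝ] ((Fin 4 → ℝ) × ℂ)) = A :=
      ContinuousLinearMap.ext fun u => hA'coe u
    rw [this]; exact h1
  have hΦs : HasStrictFDerivAt Φ (A' : (ℂ × ℂ × ℂ) →L[ℝ] ((Fin 4 → ℝ) × ℂ)) w₀ :=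
    hΦcd.hasStrictFDerivAt' hΦd one_ne_zero
  -- the local inverse ψ and the local parametrization h
  set ψ : ((Fin 4 → ℝ) × ℂ) → ℂ × ℂ × ℂ := hΦs.localInverse Φ A' w₀ with hψdef
  have hψcd : ContDiffAt ℝ 1 ψ (Φ w₀) := hΦcd.to_localInverse hΦd one_ne_zero
  set h : ℂ → ℂ × ℂ × ℂ := fun x => ψ (0, x) with hhdef
  have hΦw₀ : Φ w₀ = (0, w₀.1) := by simp [hΦdef, hw₀]
  have hg : ContDiff ℝ 1 (fun x : ℂ => ((0 : Fin 4 → ℝ), x)) := contDiff_const.prodMk contDiff_id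
  have hhcd : ContDiffAt ℝ 1 h w₀.1 := by
    have h1 : ContDiffAt ℝ 1 ψ ((0 : Fin 4 → ℝ), w₀.1) := hΦw₀ ▸ hψcd
    exact h1.comp w₀.1 (hg.contDiffAt)
  -- Φ(h x) = (0, x) near w₀.1
  have htend : Filter.Tendsto (fun x : ℂ => ((0 : Fin 4 → ℝ), x)) (nhds w₀.1) (nhds (Φ w₀)) := by
    rw [hΦw₀]
    exact (hg.continuous.tendsto w₀.1)
  have hri : ∀ᶠ x in nhds w₀.1, Φ (h x) = (0, x) :=
    htend.eventually hΦs.eventually_right_inverse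
  obtain ⟨s, hs_mem, hCs⟩ := hhcd.contDiffOn le_rfl (by simp)
  -- the open neighborhood U
  set U : Set ℂ := interior (s ∩ {x | Φ (h x) = (0, x)}) with hUdef
  have hUopen : IsOpen U := isOpen_interior
  have hUmem : w₀.1 ∈ U := by
    rw [hUdef, mem_interior_iff_mem_nhds]
    exact Filter.inter_mem hs_mem (hri)
  have hUs : U ⊆ s := interior_subset.trans Set.inter_subset_left
  have hUri : ∀ x ∈ U, Φ (h x) = (0, x) := by
    intro x hx
    have hx' : x ∈ s ∩ {x | Φ (h x) = (0, x)} := interior_subset hx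
    exact hx'.2
  have hFh : ∀ x ∈ U, F (h x) = 0 := fun x hx =>
    congrArg Prod.fst (hUri x hx)
  have hfst : ∀ x ∈ U, (h x).1 = x := fun x hx =>
    congrArg Prod.snd (hUri x hx)
  have hhU : ContDiffOn ℝ 1 h U := hCs.mono hUs
  have hhd : ∀ x ∈ U, DifferentiableAt ℝ h x := fun x hx =>
    ((hhU.differentiableOn one_ne_zero).differentiableAt (hUopen.mem_nhds hx))
  have hhw₀ : h w₀.1 = w₀ := by
    have := hΦs.localInverse_apply_image
    rw [hΦw₀] at this
    exact this
  -- derivative of the parametrization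
  set D : ℂ → (ℂ →L[ℝ] ℂ × ℂ × ℂ) := fun x => fderiv ℝ h x with hDdef
  set h₂ : ℂ → ℂ := fun x => (h x).2.1 with hh₂def
  set h₃ : ℂ → ℂ := fun x => (h x).2.2 with hh₃def
  -- the kernel property: D x maps into ker (fderiv F (h x))
  have hDker : ∀ x ∈ U, (fderiv ℝ F (h x)).comp (D x) = 0 := by
    intro x hx
    have h1 : HasFDerivAt (F ∘ h) ((fderiv ℝ F (h x)).comp (D x)) x :=
      (hFd (h x)).hasFDerivAt.comp x (hhd x hx).hasFDerivAt
    have h2 : HasFDerivAt (F ∘ h) (0 : ℂ →L[ℝ] (Fin 4 → ℝ)) x := by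
      refine (hasFDerivAt_const (0 : Fin 4 → ℝ) x).congr_of_eventuallyEq ?_
      filter_upwards [hUopen.mem_nhds hx] with y hy
      exact hFh y hy
    exact h1.unique h2
  have hDmem : ∀ x ∈ U, ∀ u, D x u ∈ LinearMap.ker (fderiv ℝ F (h x) : ℂ × ℂ × ℂ →ₗ[ℝ] Fin 4 → ℝ) := by
    intro x hx u
    have := congrArg (fun (L : ℂ →L[ℝ] Fin 4 → ℝ) => L u) (hDker x hx)
    simpa [LinearMap.mem_ker] using this
  -- the first component of D x is the identity
  have hDfst : ∀ x ∈ U, ∀ u, (D x u).1 = u := by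
    intro x hx
    have h1 : HasFDerivAt (fun x => (h x).1)
        ((ContinuousLinearMap.fst ℝ ℂ (ℂ × ℂ)).comp (D x)) x :=
      (ContinuousLinearMap.fst ℝ ℂ (ℂ × ℂ)).hasFDerivAt.comp x (hhd x hx).hasFDerivAt
    have h2 : HasFDerivAt (fun x => (h x).1) (ContinuousLinearMap.id ℝ ℂ) x := by
      refine (hasFDerivAt_id x).congr_of_eventuallyEq ?_
      filter_upwards [hUopen.mem_nhds hx] with y hy
      exact hfst y hy
    have h3 := h1.unique h2
    intro u
    have := congrArg (fun (L : ℂ →L[ℝ] ℂ) => L u) h3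
    simpa using this
  -- the semi-legendrian condition determines the second component
  have hD21 : ∀ x ∈ U, ∀ u, (D x u).2.1 = h₃ x * u := by
    intro x hx u
    have hmem := hleg (h x) (hFh x hx) (hDmem x hx u)
    have : (D x u).2.1 = (h x).2.2 * (D x u).1 := hmem
    rw [hDfst x hx u] at this
    exact this
  -- hence h₂ is holomorphic on U with derivative h₃
  have hh₂ : ∀ x ∈ U, HasDerivAt h₂ (h₃ x) x := by
    intro x hx
    have h1 : HasFDerivAt h₂
        ((ContinuousLinearMap.fst ℝ ℂ ℂ).comp
          (((ContinuousLinearMap.snd ℝ ℂ (ℂ × ℂ))).comp (D x))) x :=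
      ((ContinuousLinearMap.fst ℝ ℂ ℂ).hasFDerivAt).comp x
        (((ContinuousLinearMap.snd ℝ ℂ (ℂ × ℂ)).hasFDerivAt).comp x (hhd x hx).hasFDerivAt)
    have h2 : HasFDerivAt (𝕜 := ℂ) h₂ (ContinuousLinearMap.mul ℂ ℂ (h₃ x)) x := by
      refine hasFDerivAt_of_restrictScalars ℝ h1 ?_
      ext u
      simpa using (hD21 x hx u).symm
    have h3 := h2.hasDerivAt
    simpa using h3
  have hh₂an : AnalyticOnNhd ℂ h₂ U := by
    refine DifferentiableOn.analyticOnNhd (fun x hx => ?_) hUopen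
    exact ((hh₂ x hx).differentiableAt).differentiableWithinAt
  have hderiv_an : DifferentiableAt ℂ (deriv h₂) w₀.1 :=
    ((hh₂an.deriv) w₀.1 hUmem).differentiableAt
  have hh₃eq : h₃ =ᶠ[nhds w₀.1] deriv h₂ := by
    filter_upwards [hUopen.mem_nhds hUmem] with y hy
    exact ((hh₂ y hy).deriv).symm
  have hh₃diff : DifferentiableAt ℂ h₃ w₀.1 :=
    (hh₃eq.differentiableAt_iff).mpr hderiv_an
  have hres : fderiv ℝ h₃ w₀.1 = (fderiv ℂ h₃ w₀.1).restrictScalars ℝ :=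
    hh₃diff.fderiv_restrictScalars ℝ
  -- the third component of D w₀.1 is the (complex-linear) derivative of h₃
  have hD22 : ∀ u, (D w₀.1 u).2.2 = fderiv ℝ h₃ w₀.1 u := by
    have h1 : HasFDerivAt h₃
        ((ContinuousLinearMap.snd ℝ ℂ ℂ).comp
          (((ContinuousLinearMap.snd ℝ ℂ (ℂ × ℂ))).comp (D w₀.1))) w₀.1 :=
      ((ContinuousLinearMap.snd ℝ ℂ ℂ).hasFDerivAt).comp w₀.1
        (((ContinuousLinearMap.snd ℝ ℂ (ℂ × ℂ)).hasFDerivAt).comp w₀.1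
          (hhd w₀.1 hUmem).hasFDerivAt)
    intro u
    rw [h1.fderiv]
    simp
  -- complex linearity of D w₀.1
  have hlin : ∀ u : ℂ, D w₀.1 (Complex.I * u) = Complex.I • D w₀.1 u := by
    intro u
    refine Prod.ext ?_ (Prod.ext ?_ ?_)
    · rw [hDfst w₀.1 hUmem, Prod.smul_fst, hDfst w₀.1 hUmem, smul_eq_mul]
    · rw [hD21 w₀.1 hUmem, Prod.smul_snd, Prod.smul_fst, hD21 w₀.1 hUmem, smul_eq_mul]
      ring
    · rw [hD22, Prod.smul_snd, Prod.smul_snd, hD22, hres]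
      simp only [ContinuousLinearMap.coe_restrictScalars']
      rw [show Complex.I * u = Complex.I • u from rfl, map_smul, smul_eq_mul]
  -- D w₀.1 maps into the tangent plane at w₀
  have hker0 : ∀ u, D w₀.1 u ∈ LinearMap.ker (fderiv ℝ F w₀ : ℂ × ℂ × ℂ →ₗ[ℝ] Fin 4 → ℝ) := by
    intro u
    have := hDmem w₀.1 hUmem u
    rwa [hhw₀] at this
  -- v is in the image of D w₀.1
  have hveq : v = D w₀.1 v.1 := by
    have hd : v - D w₀.1 v.1 ∈ LinearMap.ker (fderiv ℝ F w₀ : ℂ × ℂ × ℂ →ₗ[ℝ] Fin 4 → ℝ) ⊓ fiberDir := by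
      have hk : v - D w₀.1 v.1 ∈ LinearMap.ker (fderiv ℝ F w₀ : ℂ × ℂ × ℂ →ₗ[ℝ] Fin 4 → ℝ) :=
        Submodule.sub_mem _ hv (hker0 v.1)
      refine ⟨hk, ?_, ?_⟩
      · show (v - D w₀.1 v.1).1 = 0
        rw [Prod.fst_sub, hDfst w₀.1 hUmem, sub_self]
      · show (v - D w₀.1 v.1).2.1 = 0
        have := hleg w₀ hw₀ hk
        have h2 : (v - D w₀.1 v.1).2.1 = w₀.2.2 * (v - D w₀.1 v.1).1 := this
        rw [h2, Prod.fst_sub, hDfst w₀.1 hUmem, sub_self, mul_zero]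
    rw [htrans w₀ hw₀] at hd
    have : v - D w₀.1 v.1 = 0 := by simpa using hd
    exact sub_eq_zero.mp this
  rw [hveq, ← hlin v.1]
  exact hker0 _
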